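/- Let M be a free ℛ-module of finite rank n and let φ : M → M be an injective σ-semilinear map with φ(M) = M. Then the set of fixed points M^φ = {m ∈ M : φ(m) = m} is a free R-module of rank n, and the natural ℛ-linear map ℛ ⊗_R M^φ → M, a ⊗ m ↦ a·m, is an isomorphism; in particular M admits an ℛ-basis consisting of φ-fixed elements. -/

import Mathlib

/- STATEMENT 0: Let M be a free ℛ-module of finite rank n and φ : M → M an injective
σ-semilinear map with φ(M) = M. Then M^φ = {m : φ(m) = m} is a free R-module of rank n, the
natural map ℛ ⊗_R M^φ → M, a ⊗ m ↦ a·m, is an isomorphism, and in particular M has an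
ℛ-basis of φ-fixed elements. Here ℛ = k⟦π⟧, σ is the coefficientwise q-Frobenius, and
R = {a ∈ ℛ : σ(a) = a}. -/

noncomputable section

open scoped TensorProduct

set_option maxHeartbeats 1000000
set_option synthInstance.maxHeartbeats 1000000

namespace ExcDES

variable {k : Type*} [Field k]

/-- The fixed subring `R = K ∩ ℛ = {a ∈ ℛ : σ(a) = a}` of `σ` acting on `ℛ = k⟦π⟧`. -/
def fixedSubringP (σ : PowerSeries k ≃+* PowerSeries k) : Subring (PowerSeries k) where
  carrier := {a | σ a = a}
  mul_mem' := by intro a b (ha : σ a = a) (hb : σ b = b); show σ (a * b) = a * b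
                 rw [map_mul, ha, hb]
  one_mem' := map_one σ
  add_mem' := by intro a b (ha : σ a = a) (hb : σ b = b); show σ (a + b) = a + b
                 rw [map_add, ha, hb]
  zero_mem' := map_zero σ
  neg_mem' := by intro a (ha : σ a = a); show σ (-a) = -a; rw [map_neg, ha]

lemma addhom_zero {M N : Type*} [AddCommGroup M] [AddCommGroup N] (φ : M → N)
    (hadd : ∀ x y, φ (x + y) = φ x + φ y) : φ 0 = 0 := by
  have h := hadd 0 0
  rw [add_zero] at h
  exact (left_eq_add.mp h)

/-- The `R`-submodule `M^φ` of `φ`-fixed points of `M`. -/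
def fixedSubmodule (σ : PowerSeries k ≃+* PowerSeries k)
    {M : Type*} [AddCommGroup M] [Module (PowerSeries k) M]
    (φ : M → M) (hadd : ∀ x y, φ (x + y) = φ x + φ y)
    (hsmul : ∀ (a : PowerSeries k) (m : M), φ (a • m) = σ a • φ m) :
    Submodule (fixedSubringP σ) M where
  carrier := {m | φ m = m}
  add_mem' := by intro a b (ha : φ a = a) (hb : φ b = b); show φ (a + b) = a + b
                 rw [hadd, ha, hb]
  zero_mem' := addhom_zero φ hadd
  smul_mem' := by
    intro c m (hm : φ m = m)
    have hc : σ (c : PowerSeries k) = (c : PowerSeries k) := c.2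
    show φ ((c : PowerSeries k) • m) = (c : PowerSeries k) • m
    rw [hsmul, hc, hm]

end ExcDES

namespace LangAux
open Polynomial Finset
variable {k : Type*} [Field k] [IsAlgClosed k]

lemma exists_AS (q : ℕ) (hq : 2 ≤ q) (a : k) : ∃ b : k, b - b ^ q = a := by
  have hdeg : (X ^ q + (-X + C a) : k[X]).degree = q := by
    rw [degree_add_eq_left_of_degree_lt, degree_X_pow]
    rw [degree_X_pow]
    calc (-X + C a : k[X]).degree ≤ max (-X : k[X]).degree (C a).degree := degree_add_le _ _
    _ ≤ 1 := by
        simp only [degree_neg, degree_X]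
        exact max_le le_rfl (degree_C_le.trans (by norm_num))
    _ < q := by exact_mod_cast Nat.one_lt_cast.mpr (by omega)
  obtain ⟨t, ht⟩ := IsAlgClosed.exists_root (X ^ q + (-X + C a) : k[X]) (by
    rw [hdeg]
    intro h
    exact (by omega : ¬ (q:ℕ) = 0) (by exact_mod_cast h))
  refine ⟨t, ?_⟩
  have h2 : t ^ q + (-t + a) = 0 := by simpa [IsRoot] using ht
  linear_combination -h2

lemma exists_nonzero_root (q : ℕ) (hq : 2 ≤ q) (m : ℕ) (c : ℕ → k)
    (j₀ : ℕ) (hj₀ : j₀ < m) (hc : c j₀ ≠ 0) :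
    ∃ t : k, t ≠ 0 ∧ ∑ j ∈ Finset.range m, (c j * t ^ q) ^ q ^ (m - 1 - j) = t := by
  set S : k[X] := (∑ j ∈ Finset.range m, C (c j ^ q ^ (m - 1 - j)) * X ^ (q ^ (m - j) - 1)) - 1
    with hS
  have hqpos : ∀ j, 1 ≤ q ^ (m - j) := fun j => Nat.one_le_pow _ _ (by omega)
  have hqbig : ∀ j, j < m → q ≤ q ^ (m - j) := by
    intro j hj
    calc q = q ^ 1 := (pow_one q).symm
    _ ≤ q ^ (m - j) := Nat.pow_le_pow_right (by omega) (by omega)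
  have hcoeff : S.coeff (q ^ (m - j₀) - 1) = c j₀ ^ q ^ (m - 1 - j₀) := by
    rw [hS, coeff_sub, finset_sum_coeff]
    have h1 : (1 : k[X]).coeff (q ^ (m - j₀) - 1) = 0 := by
      rw [coeff_one, if_neg]; have := hqbig j₀ hj₀; omega
    rw [h1, sub_zero]
    rw [Finset.sum_eq_single j₀]
    · rw [coeff_C_mul, coeff_X_pow, if_pos rfl, mul_one]
    · intro j hj hne
      rw [coeff_C_mul, coeff_X_pow, if_neg, mul_zero]
      intro hEq
      have hj' : j < m := mem_range.mp hj
      have : q ^ (m - j) = q ^ (m - j₀) := by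
        have := hqpos j; have := hqpos j₀; omega
      have := Nat.pow_right_injective hq this
      omega
    · intro h; exact absurd (mem_range.mpr hj₀) h
  have hSne : S.coeff (q ^ (m - j₀) - 1) ≠ 0 := by
    rw [hcoeff]; exact pow_ne_zero _ hc
  have hdegS : S.degree ≠ 0 := by
    have hle := le_degree_of_ne_zero hSne
    intro h0
    rw [h0] at hle
    have : q ^ (m - j₀) - 1 ≤ 0 := by exact_mod_cast hle
    have := hqbig j₀ hj₀; omega
  obtain ⟨t, ht⟩ := IsAlgClosed.exists_root S hdegS
  have heval : ∑ j ∈ Finset.range m, c j ^ q ^ (m - 1 - j) * t ^ (q ^ (m - j) - 1) = 1 := by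
    have := ht
    simp only [IsRoot, hS, eval_sub, eval_one, eval_finset_sum, eval_mul, eval_C, eval_pow,
      eval_X, sub_eq_zero] at this
    exact this
  have htne : t ≠ 0 := by
    intro h0
    rw [h0] at heval
    rw [Finset.sum_eq_zero] at heval
    · exact one_ne_zero heval.symm
    · intro j hj
      rw [zero_pow, mul_zero]
      have := hqbig j (mem_range.mp hj); omega
  refine ⟨t, htne, ?_⟩
  have := congrArg (· * t) heval
  simp only [Finset.sum_mul, one_mul] at this
  rw [← this]
  apply Finset.sum_congr rfl
  intro j hj
  have hj' : j < m := mem_range.mp hj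
  rw [mul_pow, ← pow_mul]
  rw [mul_assoc, ← pow_succ]
  congr 2
  have := hqbig j hj'
  have h1 : q * q ^ (m - 1 - j) = q ^ (m - j) := by
    rw [← pow_succ']
    congr 1
    omega
  omega

section FixedVector
variable {k : Type*} [Field k] [IsAlgClosed k]
variable {V : Type*} [AddCommGroup V] [Module k V] [FiniteDimensional k V]

lemma exists_fixed_vector (q : ℕ) (hq : 2 ≤ q) (σ₀ : k →+* k) (hσ₀ : ∀ x : k, σ₀ x = x ^ q)
    (ψ : V →ₛₗ[σ₀] V) (hinj : Function.Injective ψ) (v : V) (hv : v ≠ 0) :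
    ∃ x : V, x ≠ 0 ∧ ψ x = x := by
  classical
  set w : ℕ → V := fun i => (⇑ψ)^[i] v with hwdef
  have hw : ∀ i, w (i + 1) = ψ (w i) := fun i => Function.iterate_succ_apply' (⇑ψ) i v
  have hwne : ∀ i, w i ≠ 0 := by
    intro i
    induction i with
    | zero => exact hv
    | succ i ih =>
      rw [hw i]
      intro h0
      exact ih (hinj (by rw [h0, map_zero]))
  have hP : ∃ m, ¬ LinearIndependent k (fun i : Fin m => w i.1) := by
    refine ⟨Module.finrank k V + 1, fun h => ?_⟩
    have := h.fintype_card_le_finrank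
    simp [Fintype.card_fin] at this
  have hPm := Nat.find_spec hP
  have hmin : ∀ j, j < Nat.find hP → LinearIndependent k (fun i : Fin j => w i.1) :=
    fun j hj => not_not.mp (Nat.find_min hP hj)
  have hfind1 : 1 ≤ Nat.find hP := by
    by_contra h
    have h0 : Nat.find hP = 0 := by omega
    apply hPm
    haveI : IsEmpty (Fin (Nat.find hP)) := by rw [h0]; infer_instance
    exact linearIndependent_empty_type
  obtain ⟨M, hM⟩ : ∃ M, Nat.find hP = M + 1 := ⟨Nat.find hP - 1, by omega⟩
  have hPm' : ¬ LinearIndependent k (fun i : Fin (M + 1) => w i.1) := by rw [← hM]; exact hPm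
  have hLI : LinearIndependent k (fun i : Fin M => w i.1) := hmin M (by omega)
  have hmem : w M ∈ Submodule.span k (Set.range fun i : Fin M => w i.1) := by
    by_contra hmem
    apply hPm'
    have hsnoc : (fun i : Fin (M + 1) => w i.1) = Fin.snoc (fun i : Fin M => w i.1) (w M) := by
      funext i
      induction i using Fin.lastCases with
      | last => simp [Fin.snoc_last]
      | cast j => simp [Fin.snoc_castSucc]
    rw [hsnoc]
    exact linearIndependent_fin_snoc.2 ⟨hLI, hmem⟩
  rw [Submodule.mem_span_range_iff_exists_fun] at hmem
  obtain ⟨c, hc⟩ := hmem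
  have hcne : ∃ i, c i ≠ 0 := by
    by_contra hall
    push_neg at hall
    apply hwne M
    rw [← hc, Finset.sum_eq_zero]
    intro i _
    rw [hall i, zero_smul]
  obtain ⟨i₀, hi₀⟩ := hcne
  obtain ⟨s, rfl⟩ : ∃ s, M = s + 1 := ⟨M - 1, by have := i₀.pos; omega⟩
  set c' : ℕ → k := fun j => if h : j < s + 1 then c ⟨j, h⟩ else 0 with hc'def
  have hc'i₀ : c' i₀.1 ≠ 0 := by
    rw [hc'def]
    simpa [i₀.2] using hi₀
  obtain ⟨t, htne, hsum⟩ := exists_nonzero_root q hq (s + 1) c' i₀.1 i₀.2 hc'i₀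
  set y : ℕ → k := fun i => ∑ j ∈ Finset.range (i + 1), (c' j * t ^ q) ^ q ^ (i - j) with hydef
  have hy0 : y 0 = c' 0 * t ^ q := by
    show ∑ j ∈ Finset.range 1, (c' j * t ^ q) ^ q ^ (0 - j) = c' 0 * t ^ q
    simp
  have hyS : ∀ i, y (i + 1) = (y i) ^ q + t ^ q * c' (i + 1) := by
    intro i
    have hpow : (y i) ^ q = ∑ j ∈ Finset.range (i + 1), (c' j * t ^ q) ^ q ^ (i + 1 - j) := by
      rw [← hσ₀]
      rw [show y i = ∑ j ∈ Finset.range (i + 1), (c' j * t ^ q) ^ q ^ (i - j) from rfl]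
      rw [map_sum]
      apply Finset.sum_congr rfl
      intro j hj
      have hj' : j ≤ i := by simpa [Nat.lt_succ_iff] using Finset.mem_range.mp hj
      rw [hσ₀, ← pow_mul, ← pow_succ, show i - j + 1 = i + 1 - j from by omega]
    calc y (i + 1)
        = ∑ j ∈ Finset.range (i + 1 + 1), (c' j * t ^ q) ^ q ^ (i + 1 - j) := rfl
      _ = (∑ j ∈ Finset.range (i + 1), (c' j * t ^ q) ^ q ^ (i + 1 - j))
            + (c' (i + 1) * t ^ q) ^ q ^ (i + 1 - (i + 1)) := Finset.sum_range_succ _ _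
      _ = (y i) ^ q + t ^ q * c' (i + 1) := by rw [hpow]; simp [mul_comm]
  have hys : y s = t := by
    have hexp : ∀ j : ℕ, s + 1 - 1 - j = s - j := fun j => by omega
    simp only [hexp] at hsum
    calc y s = ∑ j ∈ Finset.range (s + 1), (c' j * t ^ q) ^ q ^ (s - j) := rfl
      _ = t := hsum
  set x : V := ∑ i ∈ Finset.range (s + 1), y i • w i with hxdef
  have hwM : w (s + 1) = ∑ i ∈ Finset.range (s + 1), c' i • w i := by
    rw [← hc, Finset.sum_range fun i => c' i • w i]
    apply Finset.sum_congr rfl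
    intro i _
    congr 1
    rw [hc'def]
    simp [i.2]
  have hψx : ψ x = x := by
    have e1 : ψ x = ∑ i ∈ Finset.range (s + 1), (y i) ^ q • w (i + 1) := by
      rw [hxdef, map_sum]
      apply Finset.sum_congr rfl
      intro i _
      rw [LinearMap.map_smulₛₗ, hσ₀, hw]
    rw [e1, Finset.sum_range_succ, hys, hwM, Finset.smul_sum]
    have e2 : ∀ i, t ^ q • (c' i • w i) = (t ^ q * c' i) • w i := by
      intro i; rw [smul_smul]
    simp only [e2]
    rw [Finset.sum_range_succ' (fun i => (t ^ q * c' i) • w i) s]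
    rw [hxdef, Finset.sum_range_succ' (fun i => y i • w i) s]
    rw [← add_assoc, ← Finset.sum_add_distrib]
    congr 1
    · apply Finset.sum_congr rfl
      intro i _
      rw [← add_smul, ← hyS]
    · rw [hy0, mul_comm]
  have hxne : x ≠ 0 := by
    intro h0
    have hfin : ∑ i : Fin (s + 1), y i.1 • w i.1 = 0 := by
      rw [← Finset.sum_range fun i => y i • w i, ← hxdef]
      exact h0
    have := Fintype.linearIndependent_iff.mp hLI (fun i => y i.1) hfin ⟨s, by omega⟩
    simp only at this
    rw [hys] at this
    exact htne this
  exact ⟨x, hxne, hψx⟩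

end FixedVector
section FixedBasis
universe u
variable {k : Type u} [Field k] [IsAlgClosed k]

lemma exists_fixed_basis (q : ℕ) (hq : 2 ≤ q) (σ₀ : k →+* k) (hσ₀ : ∀ x : k, σ₀ x = x ^ q) :
    ∀ (d : ℕ) (V : Type u) [AddCommGroup V] [Module k V] [FiniteDimensional k V],
      Module.finrank k V = d → ∀ ψ : V →ₛₗ[σ₀] V, Function.Injective ψ →
      ∃ b : Module.Basis (Fin d) k V, ∀ i, ψ (b i) = b i := by
  intro d
  induction d using Nat.strong_induction_on with
  | _ d IH =>
    intro V _ _ _ hd ψ hinj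
    rcases Nat.eq_zero_or_pos d with rfl | hdpos
    · haveI : Subsingleton V := by
        rw [← Module.finrank_zero_iff (R := k)]; exact hd
      exact ⟨Module.Basis.empty V, fun i => i.elim0⟩
    · haveI : Nontrivial V := Module.nontrivial_of_finrank_pos (R := k) (by omega)
      obtain ⟨v, hv⟩ := exists_ne (0 : V)
      obtain ⟨x, hx, hfx⟩ := exists_fixed_vector q hq σ₀ hσ₀ ψ hinj v hv
      set P : Submodule k V := Submodule.span k ({x} : Set V) with hPdef
      have hPinv : P ≤ P.comap ψ := by
        intro z hz
        rw [hPdef, Submodule.mem_span_singleton] at hz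
        obtain ⟨a, rfl⟩ := hz
        rw [Submodule.mem_comap, LinearMap.map_smulₛₗ, hfx]
        exact Submodule.smul_mem _ _ (Submodule.mem_span_singleton_self x)
      set ψq : V ⧸ P →ₛₗ[σ₀] V ⧸ P := P.mapQ P ψ hPinv with hψqdef
      have hinjq : Function.Injective ψq := by
        rw [injective_iff_map_eq_zero]
        intro zz hzz
        obtain ⟨z, rfl⟩ := Submodule.Quotient.mk_surjective P zz
        rw [hψqdef, Submodule.mapQ_apply, Submodule.Quotient.mk_eq_zero] at hzz
        rw [Submodule.Quotient.mk_eq_zero]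
        rw [hPdef, Submodule.mem_span_singleton] at hzz
        obtain ⟨a, ha⟩ := hzz
        obtain ⟨b, hb⟩ := IsAlgClosed.exists_pow_nat_eq a (lt_of_lt_of_le two_pos hq)
        have heq : ψ (b • x) = ψ z := by
          rw [LinearMap.map_smulₛₗ, hσ₀, hfx, hb, ha]
        rw [← hinj heq]
        exact Submodule.smul_mem _ _ (Submodule.mem_span_singleton_self x)
      have hrank : Module.finrank k (V ⧸ P) = d - 1 := by
        have h1 : Module.finrank k P = 1 := finrank_span_singleton hx
        have h2 := Submodule.finrank_quotient_add_finrank P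
        omega
      obtain ⟨b', hb'⟩ := IH (d - 1) (by omega) (V ⧸ P) hrank ψq hinjq
      have hzex : ∀ i : Fin (d - 1), ∃ z : V, Submodule.Quotient.mk z = b' i :=
        fun i => Submodule.Quotient.mk_surjective P (b' i)
      choose z hz using hzex
      have haex : ∀ i, ∃ a : k, a • x = ψ (z i) - z i := by
        intro i
        have h2 : ψq (b' i) = Submodule.Quotient.mk (ψ (z i)) := by
          rw [← hz i]; exact Submodule.mapQ_apply ..
        have hq1 : (Submodule.Quotient.mk (ψ (z i)) : V ⧸ P) = Submodule.Quotient.mk (z i) := by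
          rw [← h2, hb' i]; exact (hz i).symm
        have hmem : ψ (z i) - z i ∈ P := (Submodule.Quotient.eq P).mp hq1
        rw [hPdef, Submodule.mem_span_singleton] at hmem
        exact hmem
      choose a ha using haex
      choose g hg using fun i => exists_AS q hq (a i)
      set y : Fin (d - 1) → V := fun i => z i + g i • x with hydef
      have hfy : ∀ i, ψ (y i) = y i := by
        intro i
        rw [hydef]
        simp only
        rw [map_add, LinearMap.map_smulₛₗ, hσ₀, hfx]
        have hψz : ψ (z i) = z i + a i • x := by
          rw [ha i]; abel
        rw [hψz]
        have : a i + g i ^ q = g i := by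
          linear_combination (-1 : k) * hg i
        rw [add_assoc, ← add_smul, this]
      have hmky : ∀ i, Submodule.Quotient.mk (y i) = b' i := by
        intro i
        rw [hydef]
        simp only
        rw [Submodule.Quotient.mk_add, ← hz i]
        have : (Submodule.Quotient.mk (g i • x) : V ⧸ P) = 0 := by
          rw [Submodule.Quotient.mk_eq_zero]
          exact Submodule.smul_mem _ _ (Submodule.mem_span_singleton_self x)
        rw [this, add_zero]
      have hLIy : LinearIndependent k y := by
        have hcomp : (P.mkQ : V →ₗ[k] V ⧸ P) ∘ y = ⇑b' := by
          funext i
          simp only [Function.comp_apply, Submodule.mkQ_apply]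
          exact hmky i
        apply LinearIndependent.of_comp (P.mkQ)
        rw [hcomp]
        exact b'.linearIndependent
      have hxns : x ∉ Submodule.span k (Set.range y) := by
        intro hxs
        rw [Submodule.mem_span_range_iff_exists_fun] at hxs
        obtain ⟨cc, hcc⟩ := hxs
        have hmk : ∑ i, cc i • b' i = 0 := by
          have h3 := congrArg (P.mkQ) hcc
          rw [map_sum] at h3
          simp only [map_smul, Submodule.mkQ_apply, hmky] at h3
          rw [h3, Submodule.Quotient.mk_eq_zero]
          exact Submodule.mem_span_singleton_self x
        have hccz := Fintype.linearIndependent_iff.mp b'.linearIndependent cc hmk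
        apply hx
        rw [← hcc, Finset.sum_eq_zero]
        intro i _
        rw [hccz i, zero_smul]
      have hLIG : LinearIndependent k (Fin.cons x y : Fin (d - 1 + 1) → V) :=
        linearIndependent_fin_cons.2 ⟨hLIy, hxns⟩
      have hcard : Fintype.card (Fin (d - 1 + 1)) = Module.finrank k V := by
        rw [Fintype.card_fin]; omega
      set bV := basisOfLinearIndependentOfCardEqFinrank hLIG hcard with hbVdef
      have hbVcoe : ⇑bV = Fin.cons x y := coe_basisOfLinearIndependentOfCardEqFinrank _ _
      have hfixbV : ∀ i, ψ (bV i) = bV i := by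
        intro i
        rw [show bV i = (Fin.cons x y : Fin (d-1+1) → V) i from congrFun hbVcoe i]
        induction i using Fin.cases with
        | zero => rw [Fin.cons_zero]; exact hfx
        | succ j => rw [Fin.cons_succ]; exact hfy j
      refine ⟨bV.reindex (finCongr (by omega : d - 1 + 1 = d)), fun i => ?_⟩
      rw [Module.Basis.reindex_apply]
      exact hfixbV _
end FixedBasis

section MatrixLang
universe u
variable {k : Type u} [Field k] [IsAlgClosed k]

lemma exists_lang_matrix (q : ℕ) (hq : 2 ≤ q) (σ₀ : k →+* k) (hσ₀ : ∀ x : k, σ₀ x = x ^ q)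
    (n : ℕ) (C : Matrix (Fin n) (Fin n) k) (hC : IsUnit C.det) :
    ∃ U : Matrix (Fin n) (Fin n) k, IsUnit U.det ∧ C * U.map σ₀ = U := by
  classical
  haveI := C.invertibleOfIsUnitDet hC
  set ψ : (Fin n → k) →ₛₗ[σ₀] (Fin n → k) :=
    { toFun := fun x => C.mulVec (fun i => σ₀ (x i))
      map_add' := by
        intro x y
        show C.mulVec (fun i => σ₀ ((x + y) i)) =
          C.mulVec (fun i => σ₀ (x i)) + C.mulVec (fun i => σ₀ (y i))
        rw [show (fun i => σ₀ ((x + y) i)) = (fun i => σ₀ (x i)) + (fun i => σ₀ (y i)) from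
          funext fun i => by simp, Matrix.mulVec_add]
      map_smul' := by
        intro a x
        show C.mulVec (fun i => σ₀ ((a • x) i)) = σ₀ a • C.mulVec (fun i => σ₀ (x i))
        rw [show (fun i => σ₀ ((a • x) i)) = σ₀ a • (fun i => σ₀ (x i)) from
          funext fun i => by simp [Pi.smul_apply, smul_eq_mul], Matrix.mulVec_smul] } with hψdef
  have hψapp : ∀ x : Fin n → k, ψ x = C.mulVec (fun i => σ₀ (x i)) := fun x => rfl
  have hinjψ : Function.Injective ψ := by
    intro x y hxy
    rw [hψapp, hψapp] at hxy
    have h2 := congrArg (fun w => (⅟C).mulVec w) hxy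
    simp only [Matrix.mulVec_mulVec, invOf_mul_self, Matrix.one_mulVec] at h2
    funext i
    exact σ₀.injective (congrFun h2 i)
  obtain ⟨b0, hb0⟩ := exists_fixed_basis q hq σ₀ hσ₀ (Module.finrank k (Fin n → k))
    (Fin n → k) rfl ψ hinjψ
  set b : Module.Basis (Fin n) k (Fin n → k) :=
    b0.reindex (finCongr (by rw [Module.finrank_fin_fun])) with hbdef
  have hfixb : ∀ i, ψ (b i) = b i := by
    intro i
    rw [hbdef, Module.Basis.reindex_apply]
    exact hb0 _
  set U : Matrix (Fin n) (Fin n) k := (Pi.basisFun k (Fin n)).toMatrix ⇑b with hUdef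
  have hUent : ∀ r i, U r i = b i r := by
    intro r i
    rw [hUdef, Module.Basis.toMatrix_apply]
    simp
  haveI := (Pi.basisFun k (Fin n)).invertibleToMatrix b
  refine ⟨U, (Matrix.isUnit_iff_isUnit_det U).mp (isUnit_of_invertible _), ?_⟩
  ext r i
  have h3 := congrFun (hfixb i) r
  rw [hψapp] at h3
  calc (C * U.map σ₀) r i = ∑ l, C r l * σ₀ (b i l) := by
        simp [Matrix.mul_apply, Matrix.map_apply, hUent]
    _ = U r i := by
        rw [hUent r i, ← h3]
        simp [Matrix.mulVec, dotProduct]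
end MatrixLang

section Lift
universe u
variable {k : Type u} [Field k] [IsAlgClosed k]

noncomputable def natStrongSeq {α : Type*} (f : ∀ m : ℕ, (Fin m → α) → α) : ℕ → α
  | m => f m (fun j => natStrongSeq f j.1)
  termination_by m => m
  decreasing_by exact j.2

lemma natStrongSeq_eq {α : Type*} (f : ∀ m : ℕ, (Fin m → α) → α) (m : ℕ) :
    natStrongSeq f m = f m (fun j => natStrongSeq f j.1) := by rw [natStrongSeq]

lemma matrix_AS (q : ℕ) (hq : 2 ≤ q) (σ₀ : k →+* k) (hσ₀ : ∀ x : k, σ₀ x = x ^ q)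
    (n : ℕ) (C₀ U₀ : Matrix (Fin n) (Fin n) k) (hU₀det : IsUnit U₀.det)
    (hU₀ : C₀ * U₀.map σ₀ = U₀) (B : Matrix (Fin n) (Fin n) k) :
    ∃ X, X - C₀ * X.map σ₀ = B := by
  classical
  haveI := U₀.invertibleOfIsUnitDet hU₀det
  choose gfun hgfun using fun aval : k => exists_AS q hq aval
  set Y : Matrix (Fin n) (Fin n) k := Matrix.of fun r c => gfun ((⅟U₀ * B) r c) with hYdef
  have hY : Y - Y.map σ₀ = ⅟U₀ * B := by
    ext r c
    rw [Matrix.sub_apply, Matrix.map_apply, hσ₀]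
    rw [show Y r c = gfun ((⅟U₀ * B) r c) from rfl]
    exact hgfun _
  refine ⟨U₀ * Y, ?_⟩
  have hmap : (U₀ * Y).map ⇑σ₀ = U₀.map ⇑σ₀ * Y.map ⇑σ₀ := Matrix.map_mul
  rw [hmap, ← Matrix.mul_assoc, hU₀, ← Matrix.mul_sub, hY, ← Matrix.mul_assoc,
    mul_invOf_self, one_mul]

lemma exists_lang_powerseries (q : ℕ) (hq : 2 ≤ q)
    (σ : PowerSeries k ≃+* PowerSeries k)
    (hσ : ∀ (f : PowerSeries k) (m : ℕ),
      PowerSeries.coeff m (σ f) = PowerSeries.coeff m f ^ q)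
    (σ₀ : k →+* k) (hσ₀ : ∀ x : k, σ₀ x = x ^ q)
    (n : ℕ) (C : Matrix (Fin n) (Fin n) (PowerSeries k)) (hC : IsUnit C.det) :
    ∃ U : Matrix (Fin n) (Fin n) (PowerSeries k),
      IsUnit U.det ∧ C * U.map ⇑σ = U := by
  classical
  set Cm : ℕ → Matrix (Fin n) (Fin n) k := fun m => C.map (PowerSeries.coeff m) with hCm
  set C0 : Matrix (Fin n) (Fin n) k := C.map (PowerSeries.constantCoeff) with hC0def
  have hCm0 : Cm 0 = C0 := by
    ext r c
    simp [hCm, hC0def, Matrix.map_apply, PowerSeries.coeff_zero_eq_constantCoeff]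
  have hC0det : IsUnit C0.det := by
    have h1 : (PowerSeries.constantCoeff) C.det = C0.det := RingHom.map_det _ _
    rw [← h1]
    exact hC.map _
  obtain ⟨U₀, hU₀det, hU₀⟩ := exists_lang_matrix q hq σ₀ hσ₀ n C0 hC0det
  have hAS : ∀ B : Matrix (Fin n) (Fin n) k, ∃ X, X - C0 * X.map σ₀ = B :=
    matrix_AS q hq σ₀ hσ₀ n C0 U₀ hU₀det hU₀
  set F : ∀ m : ℕ, (Fin m → Matrix (Fin n) (Fin n) k) → Matrix (Fin n) (Fin n) k :=
    fun m prev => if m = 0 then U₀ else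
      Classical.choose (hAS (∑ j : Fin m, Cm (m - j.1) * (prev j).map σ₀)) with hF
  have hu0 : natStrongSeq F 0 = U₀ := by
    rw [natStrongSeq_eq]
    simp [hF]
  have key : ∀ m, ∑ j ∈ Finset.range (m + 1),
      Cm (m - j) * ((natStrongSeq F j).map σ₀) = natStrongSeq F m := by
    intro m
    rcases Nat.eq_zero_or_pos m with rfl | hm
    · rw [Finset.sum_range_one, hu0, hCm0, hU₀]
    · obtain ⟨s, rfl⟩ : ∃ s, m = s + 1 := ⟨m - 1, by omega⟩
      have hspec : natStrongSeq F (s + 1) - C0 * ((natStrongSeq F (s + 1)).map σ₀) =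
          ∑ j : Fin (s + 1), Cm (s + 1 - j.1) * ((natStrongSeq F j.1).map σ₀) := by
        conv_lhs => rw [natStrongSeq_eq F (s + 1)]
        rw [hF]
        simp only [Nat.succ_ne_zero, if_false]
        exact Classical.choose_spec (hAS _)
      rw [Finset.sum_range_succ]
      have h4 : ∑ j ∈ Finset.range (s + 1), Cm (s + 1 - j) * ((natStrongSeq F j).map σ₀)
          = ∑ j : Fin (s + 1), Cm (s + 1 - j.1) * ((natStrongSeq F j.1).map σ₀) :=
        Finset.sum_range (fun j => Cm (s + 1 - j) * ((natStrongSeq F j).map σ₀))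
      rw [h4, ← hspec, Nat.sub_self, hCm0]
      abel
  set U : Matrix (Fin n) (Fin n) (PowerSeries k) :=
    Matrix.of fun r c => PowerSeries.mk fun m => natStrongSeq F m r c with hUdef
  have hUcoeff : ∀ m r c, PowerSeries.coeff m (U r c) = natStrongSeq F m r c := by
    intro m r c
    rw [show U r c = PowerSeries.mk fun m => natStrongSeq F m r c from rfl,
      PowerSeries.coeff_mk]
  constructor
  case w => exact U
  constructor
  · rw [PowerSeries.isUnit_iff_constantCoeff]
    have h5 : (PowerSeries.constantCoeff) U.det = (U.map (PowerSeries.constantCoeff)).det :=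
      RingHom.map_det _ _
    have h6 : U.map (PowerSeries.constantCoeff) = U₀ := by
      ext r c
      rw [Matrix.map_apply, ← PowerSeries.coeff_zero_eq_constantCoeff_apply, hUcoeff, hu0]
    rw [h5, h6]
    exact hU₀det
  · ext r c m
    have lhs1 : PowerSeries.coeff m ((C * U.map ⇑σ) r c) =
        ∑ ab ∈ Finset.HasAntidiagonal.antidiagonal m,
          (Cm ab.1 * ((natStrongSeq F ab.2).map σ₀)) r c := by
      rw [Matrix.mul_apply, map_sum]
      have h7 : ∀ l, PowerSeries.coeff m (C r l * (U.map ⇑σ) l c) =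
          ∑ ab ∈ Finset.HasAntidiagonal.antidiagonal m,
            Cm ab.1 r l * σ₀ (natStrongSeq F ab.2 l c) := by
        intro l
        rw [PowerSeries.coeff_mul]
        apply Finset.sum_congr rfl
        intro ab _
        congr 1
        rw [Matrix.map_apply, hσ, hUcoeff, hσ₀]
      simp only [h7]
      rw [Finset.sum_comm]
      apply Finset.sum_congr rfl
      intro ab _
      rw [Matrix.mul_apply]
      apply Finset.sum_congr rfl
      intro l _
      rw [Matrix.map_apply]
    rw [lhs1, hUcoeff]
    rw [← key m]
    rw [Finset.Nat.sum_antidiagonal_eq_sum_range_succ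
      (fun a b => (Cm a * ((natStrongSeq F b).map σ₀)) r c) m]
    rw [← Finset.sum_range_reflect]
    rw [Matrix.sum_apply]
    apply Finset.sum_congr rfl
    intro j hj
    have hj' : j < m + 1 := Finset.mem_range.mp hj
    have e1 : m + 1 - 1 - j = m - j := by omega
    have e2 : m - (m - j) = j := by omega
    rw [e1, e2]
end Lift

end LangAux

open ExcDES in
theorem etale_fixed_points_free_and_basechange
    (p e : ℕ) [Fact p.Prime] (he : 0 < e)
    (k : Type*) [Field k] [IsAlgClosed k] [CharP k p]
    (σ : PowerSeries k ≃+* PowerSeries k)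
    (hσ : ∀ (f : PowerSeries k) (n : ℕ),
      PowerSeries.coeff n (σ f) = PowerSeries.coeff n f ^ p ^ e)
    (M : Type*) [AddCommGroup M] [Module (PowerSeries k) M]
    (n : ℕ) (bM : Module.Basis (Fin n) (PowerSeries k) M)
    (φ : M → M)
    (hadd : ∀ x y, φ (x + y) = φ x + φ y)
    (hsmul : ∀ (a : PowerSeries k) (m : M), φ (a • m) = σ a • φ m)
    (hinj : Function.Injective φ)
    (hsurj : Set.range φ = Set.univ) :
    Nonempty (Module.Basis (Fin n) (fixedSubringP σ) (fixedSubmodule σ φ hadd hsmul)) ∧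
    (∃ eqv : (PowerSeries k ⊗[fixedSubringP σ] (fixedSubmodule σ φ hadd hsmul))
        ≃ₗ[PowerSeries k] M,
      ∀ (a : PowerSeries k) (m : fixedSubmodule σ φ hadd hsmul),
        eqv (a ⊗ₜ m) = a • (m : M)) ∧
    (∃ b : Module.Basis (Fin n) (PowerSeries k) M, ∀ i, φ (b i) = b i) := by
  classical
  have hq : 2 ≤ p ^ e := by
    have hp := (Fact.out : p.Prime).two_le
    calc 2 ≤ p := hp
      _ = p ^ 1 := (pow_one p).symm
      _ ≤ p ^ e := Nat.pow_le_pow_right (by omega) he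
  set σ₀ : k →+* k := iterateFrobenius k p e with hσ₀def
  have hσ₀ : ∀ x : k, σ₀ x = x ^ p ^ e := fun x => iterateFrobenius_def p e x
  set φL : M →ₛₗ[(σ : PowerSeries k →+* PowerSeries k)] M :=
    { toFun := φ, map_add' := hadd, map_smul' := hsmul } with hφLdef
  set Cmat : Matrix (Fin n) (Fin n) (PowerSeries k) :=
    Matrix.of fun r c => bM.repr (φ (bM c)) r with hCdef
  have hφb : ∀ c, φ (bM c) = ∑ r, Cmat r c • bM r := by
    intro c
    have h0 : (∑ r, Cmat r c • bM r) = ∑ r, bM.repr (φ (bM c)) r • bM r :=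
      Finset.sum_congr rfl fun r _ => rfl
    rw [h0, bM.sum_repr]
  have hℓb : ∀ c, Matrix.toLin bM bM Cmat (bM c) = φ (bM c) := by
    intro c
    rw [Matrix.toLin_self, hφb c]
  have hsurjℓ : Function.Surjective (Matrix.toLin bM bM Cmat) := by
    intro m
    have hm : m ∈ Set.range φ := by rw [hsurj]; trivial
    obtain ⟨m', rfl⟩ := hm
    refine ⟨∑ r, σ (bM.repr m' r) • bM r, ?_⟩
    rw [map_sum]
    simp_rw [map_smul, hℓb]
    have h1 : φ m' = ∑ r, σ (bM.repr m' r) • φ (bM r) := by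
      conv_lhs => rw [← bM.sum_repr m']
      show φL (∑ r, bM.repr m' r • bM r) = _
      rw [map_sum]
      exact Finset.sum_congr rfl fun r _ => hsmul _ _
    rw [← h1]
  haveI : Module.Finite (PowerSeries k) M := Module.Finite.of_basis bM
  have hinjℓ := OrzechProperty.injective_of_surjective_endomorphism _ hsurjℓ
  have hCunit : IsUnit Cmat := by
    have hcoe : ⇑(Matrix.toLinAlgEquiv bM Cmat) = ⇑(Matrix.toLin bM bM Cmat) := rfl
    have h1 : IsUnit (Matrix.toLinAlgEquiv bM Cmat) :=
      (Module.End.isUnit_iff _).mpr (by rw [hcoe]; exact ⟨hinjℓ, hsurjℓ⟩)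
    have h2 := h1.map (Matrix.toLinAlgEquiv bM).symm
    rwa [AlgEquiv.symm_apply_apply] at h2
  have hCdet : IsUnit Cmat.det := (Matrix.isUnit_iff_isUnit_det Cmat).mp hCunit
  obtain ⟨U, hUdet, hU⟩ :=
    LangAux.exists_lang_powerseries (p ^ e) hq σ hσ σ₀ hσ₀ n Cmat hCdet
  haveI hUinv : Invertible U := U.invertibleOfIsUnitDet hUdet
  have hUU1 : (Matrix.toLin bM bM U).comp (Matrix.toLin bM bM (⅟U)) = LinearMap.id := by
    rw [← Matrix.toLin_mul, mul_invOf_self, Matrix.toLin_one]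
  have hUU2 : (Matrix.toLin bM bM (⅟U)).comp (Matrix.toLin bM bM U) = LinearMap.id := by
    rw [← Matrix.toLin_mul, invOf_mul_self, Matrix.toLin_one]
  set eqvU : M ≃ₗ[PowerSeries k] M :=
    LinearEquiv.ofLinear (Matrix.toLin bM bM U) (Matrix.toLin bM bM (⅟U)) hUU1 hUU2
    with heqvUdef
  set b : Module.Basis (Fin n) (PowerSeries k) M := bM.map eqvU with hbdef
  have hbi : ∀ i, b i = ∑ r, U r i • bM r := by
    intro i
    rw [hbdef, Module.Basis.map_apply, heqvUdef, LinearEquiv.ofLinear_apply, Matrix.toLin_self]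
  have hfixb : ∀ i, φ (b i) = b i := by
    intro i
    rw [hbi]
    have h1 : φ (∑ r, U r i • bM r) = ∑ r, σ (U r i) • φ (bM r) := by
      show φL (∑ r, U r i • bM r) = _
      rw [map_sum]
      exact Finset.sum_congr rfl fun r _ => hsmul _ _
    rw [h1]
    calc ∑ r, σ (U r i) • φ (bM r)
        = ∑ r, σ (U r i) • (∑ s, Cmat s r • bM s) := by
          apply Finset.sum_congr rfl
          intro r _
          rw [hφb r]
      _ = ∑ r, ∑ s, (Cmat s r * σ (U r i)) • bM s := by
          apply Finset.sum_congr rfl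
          intro r _
          rw [Finset.smul_sum]
          apply Finset.sum_congr rfl
          intro s _
          rw [smul_smul, mul_comm]
      _ = ∑ s, (∑ r, Cmat s r * σ (U r i)) • bM s := by
          rw [Finset.sum_comm]
          apply Finset.sum_congr rfl
          intro s _
          rw [Finset.sum_smul]
      _ = ∑ s, (Cmat * U.map ⇑σ) s i • bM s := by
          have hsc : ∀ s, (Cmat * U.map ⇑σ) s i = ∑ r, Cmat s r * σ (U r i) := by
            intro s
            rw [Matrix.mul_apply]
            exact Finset.sum_congr rfl fun r _ => by rw [Matrix.map_apply]
          exact Finset.sum_congr rfl fun s _ => by rw [hsc]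
      _ = ∑ s, U s i • bM s := by rw [hU]
  have hphisum : ∀ c : Fin n → PowerSeries k,
      φ (∑ i, c i • b i) = ∑ i, σ (c i) • b i := by
    intro c
    show φL (∑ i, c i • b i) = _
    rw [map_sum]
    apply Finset.sum_congr rfl
    intro i _
    show φ (c i • b i) = σ (c i) • b i
    rw [hsmul, hfixb i]
  have hreprN : ∀ m : M, φ m = m ↔ ∀ i, σ (b.repr m i) = b.repr m i := by
    intro m
    have h1 : φ m = ∑ i, σ (b.repr m i) • b i := by
      conv_lhs => rw [← b.sum_repr m]
      exact hphisum _
    constructor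
    · intro hm i
      have h2 : m = ∑ i, σ (b.repr m i) • b i := by rw [← h1]; exact hm.symm
      have h3 : ⇑(b.repr m) = fun i => σ (b.repr m i) := by
        conv_lhs => rw [h2]
        exact b.repr_sum_self _
      exact (congrFun h3 i).symm
    · intro hfix
      rw [h1]
      conv_rhs => rw [← b.sum_repr m]
      apply Finset.sum_congr rfl
      intro i _
      rw [hfix i]
  set v : Fin n → (fixedSubmodule σ φ hadd hsmul) := fun i => ⟨b i, hfixb i⟩ with hvdef
  have hLIv : LinearIndependent (fixedSubringP σ) v := by
    rw [Fintype.linearIndependent_iff]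
    intro g hg i
    have h1 := congrArg ((fixedSubmodule σ φ hadd hsmul).subtype) hg
    rw [map_sum, map_zero] at h1
    have h2 : ∑ j, (g j : PowerSeries k) • b j = 0 := by
      rw [← h1]
      apply Finset.sum_congr rfl
      intro j _
      rw [map_smul]
      rfl
    have h3 := Fintype.linearIndependent_iff.mp b.linearIndependent
      (fun j => (g j : PowerSeries k)) h2 i
    exact Subtype.ext h3
  have hspanv : ⊤ ≤ Submodule.span (fixedSubringP σ) (Set.range v) := by
    intro x _
    have hx : φ (x : M) = (x : M) := x.2
    have hcoef : ∀ i, σ (b.repr (x : M) i) = b.repr (x : M) i := (hreprN _).mp hx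
    rw [Submodule.mem_span_range_iff_exists_fun]
    refine ⟨fun i => ⟨b.repr (x : M) i, hcoef i⟩, ?_⟩
    apply Subtype.ext
    have h1 : ((∑ i, (⟨b.repr (x : M) i, hcoef i⟩ : fixedSubringP σ) • v i :
        fixedSubmodule σ φ hadd hsmul) : M) = ∑ i, b.repr (x : M) i • b i := by
      rw [Submodule.coe_sum]
      apply Finset.sum_congr rfl
      intro i _
      rfl
    rw [h1, b.sum_repr]
  set bN : Module.Basis (Fin n) (fixedSubringP σ) (fixedSubmodule σ φ hadd hsmul) :=
    Module.Basis.mk hLIv hspanv with hbNdef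
  set f : (PowerSeries k ⊗[fixedSubringP σ] (fixedSubmodule σ φ hadd hsmul))
      →ₗ[PowerSeries k] M :=
    LinearMap.liftBaseChange (PowerSeries k) (fixedSubmodule σ φ hadd hsmul).subtype
    with hfdef
  have hftmul : ∀ (a : PowerSeries k) (m : fixedSubmodule σ φ hadd hsmul),
      f (a ⊗ₜ m) = a • (m : M) := fun a m => LinearMap.liftBaseChange_tmul _ _ _ _
  have hfb : ∀ i, f (Module.Basis.baseChange (PowerSeries k) bN i) = b i := by
    intro i
    rw [Module.Basis.baseChange_apply, hftmul, one_smul, hbNdef, Module.Basis.mk_apply]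
  have hfbij : Function.Bijective f := by
    have hEq : f = ↑((Module.Basis.baseChange (PowerSeries k) bN).equiv b (Equiv.refl _)) := by
      apply Module.Basis.ext (Module.Basis.baseChange (PowerSeries k) bN)
      intro i
      rw [hfb i, LinearEquiv.coe_coe, Module.Basis.equiv_apply, Equiv.refl_apply]
    rw [hEq]
    exact LinearEquiv.bijective _
  refine ⟨⟨bN⟩, ⟨LinearEquiv.ofBijective f hfbij, ?_⟩, ⟨b, hfixb⟩⟩
  intro a m
  rw [LinearEquiv.ofBijective_apply]
  exact hftmul a m
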